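/- Let N, m, p be positive integers, M a real m×p matrix, σ_in : Fin m → Fin N and σ_out : Fin p → Fin N functions, α : Fin N → ℝ, γ : Fin N → ℝ, γ_M ∈ ℝ, and let Γ be the m×m diagonal matrix with Γ_{jj} = α_{σ_in(j)} γ_{σ_in(j)}² and A the p×p diagonal matrix with A_{jj} = α_{σ_out(j)}. Suppose that for all y ∈ ℝ^p and d ∈ ℝ^m one has (M y + d)ᵀ Γ (M y + d) + yᵀ y ≤ yᵀ A y + γ_M² dᵀ d. Then for all y, ỹ ∈ ℝ^p and d, d̃ ∈ ℝ^m, setting u := M y + d and ũ := M ỹ + d̃, the weighted sum of the local incremental supply rates is dominated by the network supply rate: Σ_{i=1}^N α_i [ γ_i² Σ_{j : σ_in(j)=i} (u_j − ũ_j)² − Σ_{j : σ_out(j)=i} (y_j − ỹ_j)² ] ≤ γ_M² Σ_j (d_j − d̃_j)² − Σ_j (y_j − ỹ_j)². -/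
import Mathlib


open Matrix

/-- Supply-rate domination. If the quadratic inequality
`(M y + d)ᵀ Γ (M y + d) + yᵀ y ≤ yᵀ A y + γ_M² dᵀ d` holds (with `Γ`, `A` the diagonal
matrices built from the weights `α` and local gains `γ`), then for any two
interconnected input/output pairs, the weighted sum of local incremental supply
rates is dominated by the network supply rate. -/
theorem stmt8 (N m p : ℕ) (hN : 0 < N) (hm : 0 < m) (hp : 0 < p)
    (M : Matrix (Fin m) (Fin p) ℝ)
    (σin : Fin m → Fin N) (σout : Fin p → Fin N)
    (α : Fin N → ℝ) (γ : Fin N → ℝ) (γM : ℝ)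
    (Γ : Matrix (Fin m) (Fin m) ℝ)
    (hΓ : Γ = Matrix.diagonal (fun j => α (σin j) * (γ (σin j)) ^ 2))
    (A : Matrix (Fin p) (Fin p) ℝ)
    (hA : A = Matrix.diagonal (fun j => α (σout j)))
    (hquad : ∀ (y : Fin p → ℝ) (d : Fin m → ℝ),
      (M *ᵥ y + d) ⬝ᵥ (Γ *ᵥ (M *ᵥ y + d)) + y ⬝ᵥ y
        ≤ y ⬝ᵥ (A *ᵥ y) + γM ^ 2 * (d ⬝ᵥ d)) :
    ∀ (y y' : Fin p → ℝ) (d d' : Fin m → ℝ),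
      ∑ i : Fin N, α i *
        ((γ i) ^ 2 *
            (∑ j ∈ Finset.univ.filter (fun j => σin j = i),
              ((M *ᵥ y + d) j - (M *ᵥ y' + d') j) ^ 2)
          - ∑ j ∈ Finset.univ.filter (fun j => σout j = i), (y j - y' j) ^ 2)
        ≤ γM ^ 2 * (∑ j, (d j - d' j) ^ 2) - ∑ j, (y j - y' j) ^ 2 := by
  intro y y' d d'
  have key := hquad (y - y') (d - d')
  have hu : M *ᵥ (y - y') + (d - d') = (M *ᵥ y + d) - (M *ᵥ y' + d') := by
    rw [Matrix.mulVec_sub]; abel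
  rw [hu, hΓ, hA] at key
  set u : Fin m → ℝ := (M *ᵥ y + d) - (M *ᵥ y' + d') with hu'
  -- rewrite dot products as sums
  have e1 : u ⬝ᵥ (Matrix.diagonal (fun j => α (σin j) * (γ (σin j)) ^ 2) *ᵥ u)
      = ∑ j, α (σin j) * ((γ (σin j)) ^ 2 * (u j) ^ 2) := by
    simp only [dotProduct, Matrix.mulVec_diagonal, Pi.sub_apply, Pi.add_apply]
    exact Finset.sum_congr rfl fun x _ => by ring
  have e2 : (y - y') ⬝ᵥ (Matrix.diagonal (fun j => α (σout j)) *ᵥ (y - y'))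
      = ∑ j, α (σout j) * ((y - y') j) ^ 2 := by
    simp only [dotProduct, Matrix.mulVec_diagonal, Pi.sub_apply]
    exact Finset.sum_congr rfl fun x _ => by ring
  have e3 : (y - y') ⬝ᵥ (y - y') = ∑ j, (y j - y' j) ^ 2 := by
    simp only [dotProduct, Pi.sub_apply]
    exact Finset.sum_congr rfl fun x _ => by ring
  have e4 : (d - d') ⬝ᵥ (d - d') = ∑ j, (d j - d' j) ^ 2 := by
    simp only [dotProduct, Pi.sub_apply]
    exact Finset.sum_congr rfl fun x _ => by ring
  have f1 : ∑ i : Fin N, α i * ((γ i) ^ 2 *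
        ∑ j ∈ Finset.univ.filter (fun j => σin j = i), (u j) ^ 2)
      = ∑ j, α (σin j) * ((γ (σin j)) ^ 2 * (u j) ^ 2) := by
    rw [← Finset.sum_fiberwise Finset.univ σin
      (fun j => α (σin j) * ((γ (σin j)) ^ 2 * (u j) ^ 2))]
    refine Finset.sum_congr rfl fun i _ => ?_
    rw [Finset.mul_sum, Finset.mul_sum]
    refine Finset.sum_congr rfl fun j hj => ?_
    rw [Finset.mem_filter] at hj
    rw [hj.2]
  have f2 : ∑ i : Fin N, α i *
        ∑ j ∈ Finset.univ.filter (fun j => σout j = i), (y j - y' j) ^ 2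
      = ∑ j, α (σout j) * ((y - y') j) ^ 2 := by
    rw [← Finset.sum_fiberwise Finset.univ σout
      (fun j => α (σout j) * ((y - y') j) ^ 2)]
    refine Finset.sum_congr rfl fun i _ => ?_
    rw [Finset.mul_sum]
    refine Finset.sum_congr rfl fun j hj => ?_
    rw [Finset.mem_filter] at hj
    rw [hj.2, Pi.sub_apply]
  have expand : ∑ i : Fin N, α i *
        ((γ i) ^ 2 * (∑ j ∈ Finset.univ.filter (fun j => σin j = i), (u j) ^ 2)
          - ∑ j ∈ Finset.univ.filter (fun j => σout j = i), (y j - y' j) ^ 2)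
      = (∑ i : Fin N, α i * ((γ i) ^ 2 *
          ∑ j ∈ Finset.univ.filter (fun j => σin j = i), (u j) ^ 2))
        - ∑ i : Fin N, α i *
          ∑ j ∈ Finset.univ.filter (fun j => σout j = i), (y j - y' j) ^ 2 := by
    rw [← Finset.sum_sub_distrib]
    exact Finset.sum_congr rfl fun i _ => by ring
  calc ∑ i : Fin N, α i *
        ((γ i) ^ 2 * (∑ j ∈ Finset.univ.filter (fun j => σin j = i), (u j) ^ 2)
          - ∑ j ∈ Finset.univ.filter (fun j => σout j = i), (y j - y' j) ^ 2)
      = u ⬝ᵥ (Matrix.diagonal (fun j => α (σin j) * (γ (σin j)) ^ 2) *ᵥ u)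
        - (y - y') ⬝ᵥ (Matrix.diagonal (fun j => α (σout j)) *ᵥ (y - y')) := by
        rw [expand, f1, f2, e1, e2]
    _ ≤ γM ^ 2 * ((d - d') ⬝ᵥ (d - d')) - (y - y') ⬝ᵥ (y - y') := by linarith
    _ = γM ^ 2 * (∑ j, (d j - d' j) ^ 2) - ∑ j, (y j - y' j) ^ 2 := by rw [e3, e4]
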